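/- For all positive integers n and d, the spreading number α_n(d) equals the independence number of the graph S_n(d), i.e., the maximum cardinality of an independent set of vertices of S_n(d). -/

import Mathlib

/-- Monomials of degree `d` in `n` variables, identified with exponent vectors
`a : Fin n → ℕ` with `∑ i, a i = d`. -/
def Mset (n d : ℕ) : Finset (Fin n → ℕ) := Finset.Nat.antidiagonalTuple n d

/-- `R₁W = { a + e_i : a ∈ W, 1 ≤ i ≤ n }`, where `e_i` is the `i`-th standard
unit vector. -/
def R1 (n : ℕ) (W : Finset (Fin n → ℕ)) : Finset (Fin n → ℕ) :=
  (W ×ˢ (Finset.univ : Finset (Fin n))).image fun p => p.1 + Pi.single p.2 1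
/-- The spreading number `α_n(d) = max{ |W| : W ⊆ M_d and |R₁W| = n·|W| }`. -/
noncomputable def spread (n d : ℕ) : ℕ :=
  sSup {k | ∃ W : Finset (Fin n → ℕ),
    W ⊆ Mset n d ∧ (R1 n W).card = n * W.card ∧ W.card = k}
/-- The graph `S_n(d)`: vertices are the monomials of degree `d` in `n` variables,
and distinct vertices `a`, `b` are adjacent iff `deg(lcm(a,b)) = d + 1`, i.e.
`∑ i, max (a i) (b i) = d + 1`. -/
def Sgraph (n d : ℕ) : SimpleGraph {a : Fin n → ℕ // ∑ i, a i = d} where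
  Adj a b := a ≠ b ∧ ∑ i, max (a.1 i) (b.1 i) = d + 1
  symm := by
    constructor
    intro a b h
    exact ⟨h.1.symm, by rw [← h.2]; exact Finset.sum_congr rfl fun i _ => Nat.max_comm _ _⟩
  loopless := by constructor; intro a h; exact h.1 rfl
/-- The independence number of a graph: the maximum cardinality of a set of
pairwise non-adjacent vertices. -/
noncomputable def indepNum {V : Type*} (G : SimpleGraph V) : ℕ :=
  sSup {k | ∃ s : Finset V, (∀ a ∈ s, ∀ b ∈ s, a ≠ b → ¬ G.Adj a b) ∧ s.card = k}

/-- For all positive `n` and `d`, the spreading number `α_n(d)` equals the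
independence number of the graph `S_n(d)`. -/
lemma sum_eq_one_aux {n : ℕ} (f : Fin n → ℕ) (h : ∑ i, f i = 1) :
    ∃ i, f i = 1 ∧ ∀ j, j ≠ i → f j = 0 := by
  have hex : ∃ i ∈ Finset.univ, f i ≠ 0 := by
    by_contra hc
    push_neg at hc
    rw [Finset.sum_eq_zero hc] at h
    omega
  obtain ⟨i, _, hi⟩ := hex
  have hle : f i ≤ 1 := h ▸ Finset.single_le_sum (fun _ _ => Nat.zero_le _) (Finset.mem_univ i)
  have htot := Finset.add_sum_erase Finset.univ f (Finset.mem_univ i)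
  refine ⟨i, by omega, fun j hj => ?_⟩
  have hj0 : f j ≤ ∑ k ∈ Finset.univ.erase i, f k :=
    Finset.single_le_sum (fun _ _ => Nat.zero_le _) (Finset.mem_erase.mpr ⟨hj, Finset.mem_univ j⟩)
  omega

lemma sum_single_shift {n : ℕ} (a b : Fin n → ℕ) (i j : Fin n)
    (h : a + Pi.single i 1 = b + Pi.single j 1) (hab : a ≠ b) :
    ∑ k, max (a k) (b k) = (∑ k, a k) + 1 := by
  have hij : i ≠ j := by
    rintro rfl
    exact hab (add_right_cancel h)
  have hk : ∀ k, max (a k) (b k) = a k + (Pi.single i 1 : Fin n → ℕ) k := by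
    intro k
    have hke := congrFun h k
    rw [Pi.add_apply, Pi.add_apply, Pi.single_apply, Pi.single_apply] at hke
    rw [Pi.single_apply]
    by_cases hki : k = i
    · rw [if_pos hki, if_neg (hki ▸ hij)] at hke
      rw [if_pos hki]
      omega
    · rw [if_neg hki] at hke ⊢
      by_cases hkj : k = j
      · rw [if_pos hkj] at hke
        omega
      · rw [if_neg hkj] at hke
        omega
  rw [Finset.sum_congr rfl (fun k _ => hk k), Finset.sum_add_distrib]
  simp

lemma exists_shift {n d : ℕ} (a b : Fin n → ℕ) (ha : ∑ i, a i = d) (hb : ∑ i, b i = d)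
    (h : ∑ i, max (a i) (b i) = d + 1) :
    ∃ i j, a + Pi.single i 1 = b + Pi.single j 1 := by
  have h1 : ∑ k, (b k - a k) = 1 := by
    have e : ∑ k, max (a k) (b k) = ∑ k, (a k + (b k - a k)) :=
      Finset.sum_congr rfl (fun k _ => by omega)
    rw [e, Finset.sum_add_distrib, ha] at h
    omega
  have h2 : ∑ k, (a k - b k) = 1 := by
    have e : ∑ k, max (a k) (b k) = ∑ k, (b k + (a k - b k)) :=
      Finset.sum_congr rfl (fun k _ => by omega)
    rw [e, Finset.sum_add_distrib, hb] at h
    omega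
  obtain ⟨i, hi1, hi2⟩ := sum_eq_one_aux _ h1
  obtain ⟨j, hj1, hj2⟩ := sum_eq_one_aux _ h2
  have hij : i ≠ j := by
    rintro rfl
    omega
  have A1 : b i = a i + 1 := by
    have := hj2 i hij
    omega
  have A2 : a j = b j + 1 := by
    have := hi2 j (Ne.symm hij)
    omega
  refine ⟨i, j, funext fun k => ?_⟩
  rw [Pi.add_apply, Pi.add_apply, Pi.single_apply, Pi.single_apply]
  by_cases hki : k = i
  · subst hki
    rw [if_pos rfl, if_neg hij]
    omega
  · have h0 : b k ≤ a k := by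
      have := hi2 k hki
      omega
    rw [if_neg hki]
    by_cases hkj : k = j
    · subst hkj
      rw [if_pos rfl]
      omega
    · have := hj2 k hkj
      rw [if_neg hkj]
      omega

lemma R1_card_iff (n d : ℕ) (W : Finset (Fin n → ℕ)) (hW : ∀ a ∈ W, ∑ i, a i = d) :
    (R1 n W).card = n * W.card ↔
    ∀ a ∈ W, ∀ b ∈ W, a ≠ b → ∑ i, max (a i) (b i) ≠ d + 1 := by
  have hprod : (W ×ˢ (Finset.univ : Finset (Fin n))).card = n * W.card := by
    simp [Finset.card_product, mul_comm]
  rw [R1, show n * W.card = (W ×ˢ (Finset.univ : Finset (Fin n))).card from hprod.symm]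
  rw [Finset.card_image_iff]
  constructor
  · intro hinj a ha b hb hab hsum
    obtain ⟨i, j, hij⟩ := exists_shift a b (hW a ha) (hW b hb) hsum
    have hpa : ((a, i) : (Fin n → ℕ) × Fin n) ∈ (W ×ˢ (Finset.univ : Finset (Fin n)) : Finset _) :=
      Finset.mem_product.mpr ⟨ha, Finset.mem_univ i⟩
    have hpb : ((b, j) : (Fin n → ℕ) × Fin n) ∈ (W ×ˢ (Finset.univ : Finset (Fin n)) : Finset _) :=
      Finset.mem_product.mpr ⟨hb, Finset.mem_univ j⟩
    have := hinj (Finset.mem_coe.mpr hpa) (Finset.mem_coe.mpr hpb) hij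
    exact hab (congrArg Prod.fst this)
  · intro hind p hp q hq heq
    obtain ⟨a, i⟩ := p
    obtain ⟨b, j⟩ := q
    have hpa := Finset.mem_product.mp (Finset.mem_coe.mp hp)
    have hpb := Finset.mem_product.mp (Finset.mem_coe.mp hq)
    simp only at heq
    by_cases hab : a = b
    · subst hab
      have hsingle : Pi.single i 1 = (Pi.single j 1 : Fin n → ℕ) := add_left_cancel heq
      have : i = j := by
        by_contra hij
        have := congrFun hsingle i
        simp [Pi.single_apply, hij] at this
      rw [this]
    · exfalso
      have := sum_single_shift a b i j heq hab
      rw [hW a hpa.1] at this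
      exact hind a hpa.1 b hpb.1 hab this

theorem spread_eq_indepNum (n d : ℕ) (hn : 0 < n) (hd : 0 < d) :
    spread n d = indepNum (Sgraph n d) := by
  unfold spread indepNum
  congr 1
  ext k
  simp only [Set.mem_setOf_eq]
  constructor
  · rintro ⟨W, hW, hcard, rfl⟩
    have hW' : ∀ a ∈ W, ∑ i, a i = d := fun a ha =>
      Finset.Nat.mem_antidiagonalTuple.mp (hW ha)
    refine ⟨W.subtype (fun a => ∑ i, a i = d), ?_, ?_⟩
    · intro a ha b hb hab hadj
      have ha' : a.1 ∈ W := Finset.mem_subtype.mp ha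
      have hb' : b.1 ∈ W := Finset.mem_subtype.mp hb
      exact (R1_card_iff n d W hW').mp hcard a.1 ha' b.1 hb'
        (fun h => hab (Subtype.ext h)) hadj.2
    · rw [Finset.card_subtype, Finset.filter_true_of_mem hW']
  · rintro ⟨s, hind, rfl⟩
    refine ⟨s.map (Function.Embedding.subtype _), ?_, ?_, by simp⟩
    · intro a ha
      obtain ⟨x, _, rfl⟩ := Finset.mem_map.mp ha
      exact Finset.Nat.mem_antidiagonalTuple.mpr x.2
    · have hW' : ∀ a ∈ s.map (Function.Embedding.subtype _), ∑ i, a i = d := by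
        intro a ha
        obtain ⟨x, _, rfl⟩ := Finset.mem_map.mp ha
        exact x.2
      rw [R1_card_iff n d _ hW']
      intro a ha b hb hab hsum
      obtain ⟨x, hx, rfl⟩ := Finset.mem_map.mp ha
      obtain ⟨y, hy, rfl⟩ := Finset.mem_map.mp hb
      exact hind x hx y hy (fun h => hab (congrArg _ h)) ⟨fun h => hab (congrArg _ h), hsum⟩
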